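/- For all integers i, k ≥ 0 and n ≥ 2: (a(i,k) : ℝ) − L(n,k)·b(i,k) = 2·ω^{−i}·(H(2k) + n·P(2k)) / (H(2k)·(√(n²−1)+1) + 2n·P(2k) − (√(n²−1)−1)). In particular a(i,k) > L(n,k)·b(i,k). -/

import Mathlib

/-- Pell numbers: P 0 = 0, P 1 = 1, P (m+2) = 2·P (m+1) + P m. -/
def pell : ℕ → ℕ
  | 0 => 0
  | 1 => 1
  | m + 2 => 2 * pell (m + 1) + pell m

/-- Half-companion Pell numbers: H 0 = 1, H 1 = 1, H (m+2) = 2·H (m+1) + H m. -/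
def hpell : ℕ → ℕ
  | 0 => 1
  | 1 => 1
  | m + 2 => 2 * hpell (m + 1) + hpell m

/-- The solution of x 0 = x0, x 1 = x1, x (i+2) = 2n·x (i+1) − x i. -/
def rec2 (n : ℕ) (x0 x1 : ℤ) : ℕ → ℤ
  | 0 => x0
  | 1 => x1
  | i + 2 => 2 * n * rec2 n x0 x1 (i + 1) - rec2 n x0 x1 i

/-- a i : a 0 = 1, a 1 = n. -/
def sa (n : ℕ) : ℕ → ℤ := rec2 n 1 n
/-- b i : b 0 = 0, b 1 = 1. -/
def sb (n : ℕ) : ℕ → ℤ := rec2 n 0 1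
/-- c i : c 0 = 1, c 1 = 2n+1. -/
def sc (n : ℕ) : ℕ → ℤ := rec2 n 1 (2 * n + 1)
/-- d i : d 0 = 1, d 1 = 1. -/
def sd (n : ℕ) : ℕ → ℤ := rec2 n 1 1

/-- X(i,k) = H(2k)·(a i + b i) + 2·P(2k)·n·(b i). -/
def XX (n i k : ℕ) : ℤ :=
  (hpell (2*k) : ℤ) * (sa n i + sb n i) + 2 * (pell (2*k) : ℤ) * n * sb n i

/-- Δ(i,k) = P(2k)·(a i + b i) + H(2k)·n·(b i). -/
def DD (n i k : ℕ) : ℤ :=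
  (pell (2*k) : ℤ) * (sa n i + sb n i) + (hpell (2*k) : ℤ) * n * sb n i

/-- a(i,k) = (X(i,k) + (a i − b i))/2. -/
def aik (n i k : ℕ) : ℤ := (XX n i k + (sa n i - sb n i)) / 2
/-- b(i,k) = (X(i,k) − (a i − b i))/2. -/
def bik (n i k : ℕ) : ℤ := (XX n i k - (sa n i - sb n i)) / 2
/-- c(i,k) = X(i,k) + Δ(i,k). -/
def cik (n i k : ℕ) : ℤ := XX n i k + DD n i k
/-- d(i,k) = X(i,k) − Δ(i,k). -/
def dik (n i k : ℕ) : ℤ := XX n i k - DD n i k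

/-- √(n²−1). -/
noncomputable def sqn (n : ℕ) : ℝ := Real.sqrt ((n : ℝ)^2 - 1)

/-- ω = n + √(n²−1). -/
noncomputable def om (n : ℕ) : ℝ := n + sqn n

/-- L(n,k) = (H(2k)·(√(n²−1)+1) + 2n·P(2k) + (√(n²−1)−1)) /
(H(2k)·(√(n²−1)+1) + 2n·P(2k) − (√(n²−1)−1)). -/
noncomputable def L (n k : ℕ) : ℝ :=
  ((hpell (2*k) : ℝ) * (sqn n + 1) + 2*n*(pell (2*k) : ℝ) + (sqn n - 1)) /
  ((hpell (2*k) : ℝ) * (sqn n + 1) + 2*n*(pell (2*k) : ℝ) - (sqn n - 1))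

/-- S(n,0) = (√(n²−1)+1+n)/(√(n²−1)+1−n); for k ≥ 1,
S(n,k) = ((√(n²−1)+1)·P(2k+1) + n·H(2k+1)) / ((√(n²−1)+1)·P(2k−1) + n·H(2k−1)). -/
noncomputable def S (n k : ℕ) : ℝ :=
  if k = 0 then (sqn n + 1 + n) / (sqn n + 1 - n)
  else ((sqn n + 1) * (pell (2*k+1) : ℝ) + n * (hpell (2*k+1) : ℝ)) /
       ((sqn n + 1) * (pell (2*k-1) : ℝ) + n * (hpell (2*k-1) : ℝ))

lemma hpell_odd : ∀ m, Odd (hpell m)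
  | 0 => ⟨0, rfl⟩
  | 1 => ⟨0, rfl⟩
  | m + 2 => by
    obtain ⟨j, hj⟩ := hpell_odd m
    exact ⟨hpell (m+1) + j, by simp only [hpell]; omega⟩

lemma key_mul (n : ℕ) (hn : 2 ≤ n) :
    ∀ i, ((sa n i : ℝ) - sqn n * (sb n i : ℝ)) * om n ^ i = 1 := by
  have hn2 : (2:ℝ) ≤ (n:ℝ) := by exact_mod_cast hn
  have hs0 : (0:ℝ) ≤ sqn n := Real.sqrt_nonneg _
  have hs2 : sqn n ^ 2 = (n:ℝ)^2 - 1 := Real.sq_sqrt (by nlinarith)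
  have hom : om n ^ 2 = 2*(n:ℝ)*om n - 1 := by
    unfold om; nlinarith [hs2]
  intro i
  induction i using Nat.strong_induction_on with
  | _ i ih =>
    match i with
    | 0 => simp [sa, sb, rec2]
    | 1 =>
      have h : om n * ((n:ℝ) - sqn n) = 1 := by unfold om; nlinarith [hs2]
      simp only [sa, sb, rec2, pow_one, Int.cast_natCast, Int.cast_one]
      linear_combination h
    | i + 2 =>
      have h1 := ih (i+1) (by omega)
      have h0 := ih i (by omega)
      have hsa : (sa n (i+2) : ℝ) = 2*(n:ℝ)*(sa n (i+1):ℝ) - (sa n i:ℝ) := by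
        have h : sa n (i+2) = 2*(n:ℤ)*sa n (i+1) - sa n i := rfl
        rw [h]; push_cast; ring
      have hsb : (sb n (i+2) : ℝ) = 2*(n:ℝ)*(sb n (i+1):ℝ) - (sb n i:ℝ) := by
        have h : sb n (i+2) = 2*(n:ℤ)*sb n (i+1) - sb n i := rfl
        rw [h]; push_cast; ring
      rw [hsa, hsb]
      linear_combination (2*(n:ℝ)*om n)*h1 - (om n^2)*h0 - hom

lemma key (n : ℕ) (hn : 2 ≤ n) (i : ℕ) :
    (sa n i : ℝ) - sqn n * (sb n i : ℝ) = om n ^ (-(i:ℤ)) := by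
  rw [zpow_neg, zpow_natCast]
  exact eq_inv_of_mul_eq_one_left (key_mul n hn i)

theorem stmt_6 (n i k : ℕ) (hn : 2 ≤ n) :
    ((aik n i k : ℝ) - L n k * (bik n i k : ℝ) =
      2 * om n ^ (-(i:ℤ)) * ((hpell (2*k) : ℝ) + n * (pell (2*k) : ℝ)) /
        ((hpell (2*k) : ℝ) * (sqn n + 1) + 2*n*(pell (2*k) : ℝ) - (sqn n - 1))) ∧
    (aik n i k : ℝ) > L n k * (bik n i k : ℝ) := by
  have hn2 : (2:ℝ) ≤ (n:ℝ) := by exact_mod_cast hn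
  have hs0 : (0:ℝ) ≤ sqn n := Real.sqrt_nonneg _
  have hw : (0:ℝ) < om n := by unfold om; linarith
  obtain ⟨m, hm⟩ := hpell_odd (2*k)
  -- divisibility facts
  have hdvda : (2:ℤ) ∣ XX n i k + (sa n i - sb n i) := by
    refine ⟨(m:ℤ)*(sa n i + sb n i) + (pell (2*k):ℤ)*n*(sb n i) + sa n i, ?_⟩
    unfold XX; rw [show ((hpell (2*k):ℤ)) = 2*(m:ℤ)+1 by exact_mod_cast hm]; ring
  have hdvdb : (2:ℤ) ∣ XX n i k - (sa n i - sb n i) := by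
    refine ⟨(m:ℤ)*(sa n i + sb n i) + (pell (2*k):ℤ)*n*(sb n i) + sb n i, ?_⟩
    unfold XX; rw [show ((hpell (2*k):ℤ)) = 2*(m:ℤ)+1 by exact_mod_cast hm]; ring
  have haZ : 2 * aik n i k = XX n i k + (sa n i - sb n i) :=
    Int.mul_ediv_cancel' hdvda
  have hbZ : 2 * bik n i k = XX n i k - (sa n i - sb n i) :=
    Int.mul_ediv_cancel' hdvdb
  set Hr : ℝ := (hpell (2*k) : ℝ) with hHr
  set Pr : ℝ := (pell (2*k) : ℝ) with hPr
  set s : ℝ := sqn n with hsdef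
  set A : ℝ := (sa n i : ℝ) with hA
  set B : ℝ := (sb n i : ℝ) with hB
  have hXX : (XX n i k : ℝ) = Hr*(A+B) + 2*Pr*(n:ℝ)*B := by
    unfold XX; push_cast; ring
  have haR : (aik n i k : ℝ) = ((XX n i k : ℝ) + (A - B))/2 := by
    have : (2:ℝ) * (aik n i k : ℝ) = (XX n i k : ℝ) + (A - B) := by
      rw [hA, hB]; exact_mod_cast haZ
    linarith
  have hbR : (bik n i k : ℝ) = ((XX n i k : ℝ) - (A - B))/2 := by
    have : (2:ℝ) * (bik n i k : ℝ) = (XX n i k : ℝ) - (A - B) := by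
      rw [hA, hB]; exact_mod_cast hbZ
    linarith
  have hH1 : (1:ℝ) ≤ Hr := by
    rw [hHr]; exact_mod_cast Nat.one_le_iff_ne_zero.mpr (by omega)
  have hP0 : (0:ℝ) ≤ Pr := by rw [hPr]; positivity
  have hD : (0:ℝ) < Hr*(s+1) + 2*(n:ℝ)*Pr - (s-1) := by
    nlinarith [mul_le_mul_of_nonneg_right hH1 hs0, mul_nonneg (by linarith : (0:ℝ) ≤ 2*(n:ℝ)) hP0]
  have hkey : A - s * B = om n ^ (-(i:ℤ)) := key n hn i
  have heq : (aik n i k : ℝ) - L n k * (bik n i k : ℝ) =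
      2 * om n ^ (-(i:ℤ)) * (Hr + (n:ℝ) * Pr) /
        (Hr*(s+1) + 2*(n:ℝ)*Pr - (s-1)) := by
    rw [← hkey, haR, hbR, hXX]
    unfold L
    rw [← hHr, ← hPr, ← hsdef]
    rw [div_mul_eq_mul_div, eq_div_iff hD.ne', sub_mul, div_mul_cancel₀ _ hD.ne']
    ring
  refine ⟨heq, ?_⟩
  have hwpos : (0:ℝ) < om n ^ (-(i:ℤ)) := zpow_pos hw _
  have hnum : (0:ℝ) < 2 * om n ^ (-(i:ℤ)) * (Hr + (n:ℝ) * Pr) := by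
    have : (0:ℝ) < Hr + (n:ℝ)*Pr := by nlinarith
    positivity
  have := div_pos hnum hD
  linarith [heq ▸ this]
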